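/- Let F = {f_i(x) = x/N + i/N}_{i∈Γ} be an IFS on [0,1]^d with Γ ⊊ {0,…,N−1}^d, and K its attractor. There exist a finite set V ⊆ ℤ^d\{0} and δ > 0 such that for every probability vector p on Γ there exists v ∈ V with H(M(Π_v p)) ≤ 1 − δ, where Π_v p is the pushforward of p under i ↦ i·v, M reduces mod N, and H is Shannon entropy base N on {0,…,N−1}. -/

import Mathlib

open Finset

noncomputable section

/-- Shannon entropy with logarithm base `N`. -/
def entropyBase (N : ℕ) (ν : Fin N → ℝ) : ℝ :=
  -∑ a, ν a * Real.logb N (ν a)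

lemma entropy_lt_one (N : ℕ) (hN : 2 ≤ N) (ν : Fin N → ℝ) (hnn : ∀ a, 0 ≤ ν a)
    (hsum : ∑ a, ν a = 1) (hne : ∃ a, ν a ≠ 1 / N) :
    entropyBase N ν < 1 := by
  have hN0 : (0:ℝ) < N := by positivity
  have hlog : 0 < Real.log N := Real.log_pos (by exact_mod_cast hN)
  have hH : entropyBase N ν = (∑ a, Real.negMulLog (ν a)) / Real.log N := by
    rw [eq_div_iff hlog.ne', entropyBase, neg_mul, Finset.sum_mul, ← Finset.sum_neg_distrib]
    refine Finset.sum_congr rfl fun a _ => ?_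
    simp only [Real.negMulLog, Real.logb]
    field_simp
  rw [hH, div_lt_one hlog]
  -- strict Jensen
  have hcards : ∑ _a : Fin N, (N:ℝ)⁻¹ = 1 := by
    simp [Finset.sum_const, Finset.card_univ]
    field_simp
  have hnc : ∃ j ∈ (univ : Finset (Fin N)), ∃ k ∈ univ, ν j ≠ ν k := by
    by_contra h
    push_neg at h
    obtain ⟨a, ha⟩ := hne
    apply ha
    have hall : ∀ b, ν b = ν a := fun b => h b (mem_univ _) a (mem_univ _)
    have : ∑ b, ν b = N * ν a := by
      rw [Finset.sum_congr rfl fun b _ => hall b]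
      simp [Finset.sum_const, Finset.card_univ, mul_comm]
    rw [hsum] at this
    field_simp
    linarith
  have hj := Real.strictConcaveOn_negMulLog.lt_map_sum
    (t := (univ : Finset (Fin N))) (w := fun _ => (N:ℝ)⁻¹) (p := ν)
    (fun i _ => by positivity) hcards (fun i _ => hnn i) hnc
  simp only [smul_eq_mul] at hj
  have h1 : ∑ i : Fin N, (N:ℝ)⁻¹ * ν i = (N:ℝ)⁻¹ := by
    rw [← Finset.mul_sum, hsum, mul_one]
  rw [h1] at hj
  have h2 : Real.negMulLog ((N:ℝ)⁻¹) = (N:ℝ)⁻¹ * Real.log N := by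
    simp [Real.negMulLog, Real.log_inv]
  rw [h2, ← Finset.mul_sum] at hj
  have := mul_lt_mul_of_pos_left hj hN0
  rw [← mul_assoc, ← mul_assoc, mul_inv_cancel₀ hN0.ne', one_mul, one_mul] at this
  exact this

lemma card_ker_ge (N : ℕ) [NeZero N] (d : ℕ) (u : Fin d → ZMod N) :
    N ^ d ≤ N * (Finset.univ.filter
      (fun w : Fin d → ZMod N => ∑ j, u j * w j = 0)).card := by
  set φ : (Fin d → ZMod N) →+ ZMod N :=
    { toFun := fun w => ∑ j, u j * w j
      map_zero' := by simp
      map_add' := by intro x y; simp [mul_add, Finset.sum_add_distrib] }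
  have hker : (Finset.univ.filter
      (fun w : Fin d → ZMod N => ∑ j, u j * w j = 0)).card = Nat.card φ.ker := by
    rw [Nat.card_eq_fintype_card, ← Fintype.card_subtype]
    exact Fintype.card_congr (Equiv.subtypeEquivRight (fun x => by
      simp [AddMonoidHom.mem_ker, φ]))
  have hG : Nat.card (Fin d → ZMod N) = N ^ d := by
    simp [Nat.card_eq_fintype_card, ZMod.card]
  have hquot := AddSubgroup.card_eq_card_quotient_mul_card_addSubgroup φ.ker
  have hrange : Nat.card ((Fin d → ZMod N) ⧸ φ.ker) = Nat.card φ.range :=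
    Nat.card_congr (QuotientAddGroup.quotientKerEquivRange φ).toEquiv
  have hrle : Nat.card φ.range ≤ N := by
    have := Nat.card_le_card_of_injective _ (Subtype.val_injective
      (p := fun x => x ∈ φ.range))
    simpa [Nat.card_eq_fintype_card, ZMod.card] using this
  rw [hker]
  calc N ^ d = Nat.card ((Fin d → ZMod N) ⧸ φ.ker) * Nat.card φ.ker := by
        rw [← hquot, hG]
    _ ≤ N * Nat.card φ.ker := Nat.mul_le_mul_right _ (hrange ▸ hrle)

lemma exists_nonuniform (d N : ℕ) (hd : 1 ≤ d) (hN : 2 ≤ N) [NeZero N]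
    (Γ : Finset (Fin d → ℕ))
    (hΓsub : ∀ i ∈ Γ, ∀ j, i j < N)
    (i0 : Fin d → ℕ) (hi0lt : ∀ j, i0 j < N) (hi0 : i0 ∉ Γ)
    (p : (Fin d → ℕ) → ℝ) (hp0 : ∀ i, 0 ≤ p i)
    (hpsum : ∑ i ∈ Γ, p i = 1) :
    ∃ w : Fin d → ZMod N, w ≠ 0 ∧ ∃ s : ZMod N,
      ∑ i ∈ Γ.filter (fun i => ∑ j, (i j : ZMod N) * w j = s), p i ≠ 1 / N := by
  by_contra hcon
  push_neg at hcon
  have hNR : (2:ℝ) ≤ (N:ℝ) := by exact_mod_cast hN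
  have hNpos : (0:ℝ) < N := by linarith
  set A : ℝ := (N:ℝ) ^ d with hA
  have hApos : (0:ℝ) < A := by positivity
  have hAN : (N:ℝ) ≤ A := by
    calc (N:ℝ) = (N:ℝ)^1 := (pow_one _).symm
    _ ≤ (N:ℝ)^d := pow_le_pow_right₀ (by linarith) hd
  set cmap : (Fin d → ℕ) → (Fin d → ZMod N) := fun i j => (i j : ZMod N) with hcmap
  set Q : (Fin d → ZMod N) → ℝ :=
    fun a => ∑ i ∈ Γ.filter (fun i => cmap i = a), p i with hQ
  have hcardG : (Fintype.card (Fin d → ZMod N)) = N ^ d := by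
    simp [ZMod.card]
  -- every class has small mass
  have key : ∀ a : Fin d → ZMod N, Q a ≤ 1 / A := by
    intro a
    set S : ℝ := ∑ w : Fin d → ZMod N,
      ∑ i ∈ Γ.filter (fun i => ∑ j, (i j : ZMod N) * w j = ∑ j, a j * w j), p i with hS
    have hS1 : S = ((N:ℝ)^d - 1) / N + 1 := by
      rw [hS, ← Finset.sum_erase_add _ _ (mem_univ (0 : Fin d → ZMod N))]
      have h0 : ∑ i ∈ Γ.filter (fun i =>
          ∑ j, (i j : ZMod N) * (0 : Fin d → ZMod N) j = ∑ j, a j * (0 : Fin d → ZMod N) j),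
          p i = 1 := by
        rw [Finset.filter_true_of_mem (fun i _ => by simp)]
        exact hpsum
      rw [h0, Finset.sum_congr rfl
        (fun w hw => hcon w (Finset.mem_erase.1 hw).1 (∑ j, a j * w j))]
      rw [Finset.sum_const, Finset.card_erase_of_mem (mem_univ _), Finset.card_univ, hcardG]
      have h1N : 1 ≤ N ^ d := Nat.one_le_pow _ _ (by omega)
      rw [nsmul_eq_mul, Nat.cast_sub h1N]
      push_cast
      ring
    have hS2 : S = ∑ i ∈ Γ, p i * ((Finset.univ.filter
        (fun w : Fin d → ZMod N => ∑ j, ((i j : ZMod N) - a j) * w j = 0)).card : ℝ) := by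
      rw [hS]
      simp_rw [Finset.sum_filter]
      rw [Finset.sum_comm]
      refine Finset.sum_congr rfl fun i _ => ?_
      have hcond : ∀ w : Fin d → ZMod N,
          (∑ j, (i j : ZMod N) * w j = ∑ j, a j * w j)
            ↔ (∑ j, ((i j : ZMod N) - a j) * w j = 0) := by
        intro w
        rw [← sub_eq_zero]
        simp [Finset.sum_sub_distrib, sub_mul]
      calc ∑ w : Fin d → ZMod N,
            (if ∑ j, (i j : ZMod N) * w j = ∑ j, a j * w j then p i else 0)
          = ∑ w : Fin d → ZMod N,
            (if ∑ j, ((i j : ZMod N) - a j) * w j = 0 then p i else 0) := by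
            exact Finset.sum_congr rfl fun w _ => by rw [if_congr (hcond w) rfl rfl]
        _ = ∑ w ∈ Finset.univ.filter
            (fun w : Fin d → ZMod N => ∑ j, ((i j : ZMod N) - a j) * w j = 0), p i := by
            rw [Finset.sum_filter]
        _ = p i * _ := by rw [Finset.sum_const, nsmul_eq_mul, mul_comm]
    -- lower bound for S
    have hlow : A / N * (1 - Q a) + A * Q a ≤ S := by
      rw [hS2, ← Finset.sum_filter_add_sum_filter_not Γ (fun i => cmap i = a)]
      have hQa' : ∑ i ∈ Γ.filter (fun i => ¬ cmap i = a), p i = 1 - Q a := by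
        have := Finset.sum_filter_add_sum_filter_not Γ (fun i => cmap i = a) p
        rw [hpsum] at this
        rw [hQ]
        linarith [this]
      have h1 : ∑ i ∈ Γ.filter (fun i => cmap i = a), p i *
          ((Finset.univ.filter
            (fun w : Fin d → ZMod N => ∑ j, ((i j : ZMod N) - a j) * w j = 0)).card : ℝ)
          = A * Q a := by
        rw [hQ, Finset.mul_sum]
        refine Finset.sum_congr rfl fun i hi => ?_
        have hia : cmap i = a := (Finset.mem_filter.1 hi).2
        have hzero : ∀ j, (i j : ZMod N) - a j = 0 := by
          intro j; rw [← congrFun hia j]; simp [hcmap]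
        have : (Finset.univ.filter
            (fun w : Fin d → ZMod N => ∑ j, ((i j : ZMod N) - a j) * w j = 0)) =
            Finset.univ := by
          refine Finset.filter_true_of_mem fun w _ => ?_
          simp [hzero]
        rw [this, Finset.card_univ, hcardG]
        push_cast [hA]
        ring
      have h2 : ∀ i ∈ Γ.filter (fun i => ¬ cmap i = a),
          p i * (A / N) ≤ p i * ((Finset.univ.filter
            (fun w : Fin d → ZMod N => ∑ j, ((i j : ZMod N) - a j) * w j = 0)).card : ℝ) := by
        intro i _
        refine mul_le_mul_of_nonneg_left ?_ (hp0 i)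
        rw [div_le_iff₀ hNpos]
        have := card_ker_ge N d (fun j => (i j : ZMod N) - a j)
        have : ((N:ℝ))^d ≤ (N:ℝ) * ((Finset.univ.filter
            (fun w : Fin d → ZMod N => ∑ j, ((i j : ZMod N) - a j) * w j = 0)).card : ℝ) := by
          exact_mod_cast this
        linarith [this]
      have h2' : (1 - Q a) * (A / N) ≤ ∑ i ∈ Γ.filter (fun i => ¬ cmap i = a),
          p i * ((Finset.univ.filter
            (fun w : Fin d → ZMod N => ∑ j, ((i j : ZMod N) - a j) * w j = 0)).card : ℝ) := by
        calc (1 - Q a) * (A / N)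
            = ∑ i ∈ Γ.filter (fun i => ¬ cmap i = a), p i * (A / N) := by
              rw [← Finset.sum_mul, hQa']
          _ ≤ _ := Finset.sum_le_sum h2
      rw [h1]
      linarith [h2']
    rw [hS1] at hlow
    -- algebra
    have hkey : Q a * (A * ((N:ℝ) - 1)) ≤ (N:ℝ) - 1 := by
      have hmul := mul_le_mul_of_nonneg_left hlow (le_of_lt hNpos)
      have hANe : (N:ℝ) ≠ 0 := hNpos.ne'
      field_simp at hmul
      nlinarith [hmul]
    rw [le_div_iff₀ hApos]
    nlinarith [hkey]
  -- final contradiction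
  set a0 : Fin d → ZMod N := fun j => (i0 j : ZMod N) with ha0
  have hQa0 : Q a0 = 0 := by
    rw [hQ]
    simp only []
    rw [Finset.filter_false_of_mem, Finset.sum_empty]
    intro i hi hcontra
    apply hi0
    have hii : i = i0 := by
      funext j
      have h1 : ((i j : ZMod N)) = (i0 j : ZMod N) := congrFun hcontra j
      have h2 := congrArg ZMod.val h1
      rwa [ZMod.val_cast_of_lt (hΓsub i hi j), ZMod.val_cast_of_lt (hi0lt j)] at h2
    rwa [← hii]
  have hpart : ∑ a : Fin d → ZMod N, Q a = 1 := by
    rw [hQ]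
    rw [Finset.sum_fiberwise_of_maps_to (fun i _ => Finset.mem_univ (cmap i)) p]
    exact hpsum
  have hsplit := Finset.add_sum_erase (univ : Finset (Fin d → ZMod N)) Q (mem_univ a0)
  have hbound := Finset.sum_le_card_nsmul ((univ : Finset (Fin d → ZMod N)).erase a0) Q (1/A)
    (fun a _ => key a)
  rw [Finset.card_erase_of_mem (mem_univ _), Finset.card_univ, hcardG] at hbound
  have h1N : 1 ≤ N ^ d := Nat.one_le_pow _ _ (by omega)
  rw [nsmul_eq_mul, Nat.cast_sub h1N] at hbound
  have hcast : ((N ^ d : ℕ) : ℝ) = A := by push_cast [hA]; ring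
  rw [hcast] at hbound
  have hfin : (1:ℝ) ≤ (A - 1) * (1/A) := by
    calc (1:ℝ) = ∑ a : Fin d → ZMod N, Q a := hpart.symm
      _ = Q a0 + ∑ x ∈ univ.erase a0, Q x := hsplit.symm
      _ = ∑ x ∈ univ.erase a0, Q x := by rw [hQa0, zero_add]
      _ ≤ (A - ((1:ℕ):ℝ)) * (1/A) := hbound
      _ = (A - 1) * (1/A) := by norm_num
  have hfin2 := mul_le_mul_of_nonneg_right hfin hApos.le
  rw [one_mul, mul_assoc, one_div, inv_mul_cancel₀ hApos.ne', mul_one] at hfin2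
  linarith

lemma filter_bridge (d N : ℕ) [NeZero N] (Γ : Finset (Fin d → ℕ))
    (w : Fin d → ZMod N) (r : Fin N) :
    Γ.filter (fun i => (∑ j, (i j : ℤ) * ((w j).val : ℤ)) % (N:ℤ) = (r : ℤ)) =
    Γ.filter (fun i => ∑ j, (i j : ZMod N) * w j = ((r : ℕ) : ZMod N)) := by
  refine Finset.filter_congr fun i _ => ?_
  have hcast : ((∑ j, (i j : ℤ) * ((w j).val : ℤ) : ℤ) : ZMod N)
      = ∑ j, (i j : ZMod N) * w j := by
    push_cast
    refine Finset.sum_congr rfl fun j _ => ?_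
    rw [ZMod.natCast_val, ZMod.cast_id]
  have hrmod : (r:ℤ) % (N:ℤ) = (r:ℤ) :=
    Int.emod_eq_of_lt (by positivity) (by exact_mod_cast r.isLt)
  have hr : (((r:ℕ)):ZMod N) = (((r:ℤ)) : ZMod N) := by push_cast; ring
  have hmodeq : ((∑ j, (i j : ℤ) * ((w j).val : ℤ)) ≡ (r:ℤ) [ZMOD (N:ℤ)]) ↔
      (∑ j, (i j : ℤ) * ((w j).val : ℤ)) % (N:ℤ) = (r:ℤ) := by
    unfold Int.ModEq
    rw [hrmod]
  rw [hr, ← hcast, ZMod.intCast_eq_intCast_iff, hmodeq]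

lemma continuous_finset_inf' {ι X : Type*} [TopologicalSpace X] {s : Finset ι}
    (hs : s.Nonempty) (f : ι → X → ℝ) (hf : ∀ i, Continuous (f i)) :
    Continuous (fun x => s.inf' hs (fun i => f i x)) := by
  induction hs using Finset.Nonempty.cons_induction with
  | singleton a => simpa using hf a
  | cons a s ha hs ih =>
      simp only [Finset.inf'_cons hs]
      exact (hf a).min ih

theorem stmt_16 (d N : ℕ) (hd : 1 ≤ d) (hN : 2 ≤ N)
    (Γ : Finset (Fin d → ℕ)) (hΓne : Γ.Nonempty)
    (hΓsub : ∀ i ∈ Γ, ∀ j, i j < N)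
    (hΓproper : ∃ i : Fin d → ℕ, (∀ j, i j < N) ∧ i ∉ Γ) :
    ∃ V : Finset (Fin d → ℤ), (0 : Fin d → ℤ) ∉ V ∧ ∃ δ : ℝ, 0 < δ ∧
      ∀ p : (Fin d → ℕ) → ℝ, (∀ i, 0 ≤ p i) → (∀ i ∉ Γ, p i = 0) →
        ∑ i ∈ Γ, p i = 1 →
        ∃ v ∈ V, entropyBase N
            (fun r : Fin N =>
              ∑ i ∈ Γ.filter (fun i => (∑ j, (i j : ℤ) * v j) % (N : ℤ) = (r : ℤ)), p i) ≤
          1 - δ := by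
  haveI : NeZero N := ⟨by omega⟩
  haveI : Fact (1 < N) := ⟨by omega⟩
  obtain ⟨i0, hi0lt, hi0⟩ := hΓproper
  obtain ⟨i1, hi1⟩ := hΓne
  classical
  set W : Finset (Fin d → ZMod N) := Finset.univ.filter (fun w => w ≠ 0) with hWdef
  have hWne : W.Nonempty := by
    refine ⟨fun _ => 1, ?_⟩
    rw [hWdef, mem_filter]
    refine ⟨mem_univ _, fun h => ?_⟩
    exact one_ne_zero (congrFun h ⟨0, hd⟩)
  set V : Finset (Fin d → ℤ) := W.image (fun w j => ((w j).val : ℤ)) with hVdef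
  have h0V : (0 : Fin d → ℤ) ∉ V := by
    rw [hVdef]
    simp only [mem_image, not_exists]
    intro w
    rintro ⟨hwx, hw0⟩
    have hwW : w ≠ 0 := (mem_filter.1 hwx).2
    apply hwW
    funext j
    have h1 : ((w j).val : ℤ) = 0 := congrFun hw0 j
    have h2 : (w j).val = 0 := by exact_mod_cast h1
    exact (ZMod.val_eq_zero _).1 h2
  -- ν and entropy functionals
  set ν : (Fin d → ZMod N) → ((Fin d → ℕ) → ℝ) → Fin N → ℝ := fun w p r =>
    ∑ i ∈ Γ.filter (fun i => (∑ j, (i j : ℤ) * ((w j).val : ℤ)) % (N:ℤ) = (r:ℤ)), p i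
    with hνdef
  set E : (Fin d → ZMod N) → ((Fin d → ℕ) → ℝ) → ℝ := fun w p =>
    entropyBase N (ν w p) with hEdef
  have hEcont : ∀ w, Continuous (E w) := by
    intro w
    have hh : Continuous (fun x : ℝ => x * Real.logb N x) := by
      simpa [Real.logb, mul_div_assoc] using Real.continuous_mul_log.div_const (Real.log N)
    have hg : ∀ r : Fin N, Continuous (fun p => ν w p r) := fun r =>
      continuous_finset_sum _ fun i _ => continuous_apply i
    show Continuous fun p => -∑ r, ν w p r * Real.logb N (ν w p r)
    exact (continuous_finset_sum _ fun r _ => hh.comp (hg r)).neg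
  set g : ((Fin d → ℕ) → ℝ) → ℝ := fun p => W.inf' hWne (fun w => E w p) with hgdef
  have hgcont : Continuous g := continuous_finset_inf' hWne E hEcont
  -- compact domain
  set K : Set ((Fin d → ℕ) → ℝ) :=
    (Set.univ.pi fun i => if i ∈ Γ then Set.Icc (0:ℝ) 1 else {0})
      ∩ {p | ∑ i ∈ Γ, p i = 1} with hKdef
  have hKmem : ∀ p : (Fin d → ℕ) → ℝ, (∀ i, 0 ≤ p i) → (∀ i ∉ Γ, p i = 0) →
      (∑ i ∈ Γ, p i = 1) → p ∈ K := by
    intro p hp0 hpsupp hpsum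
    refine ⟨fun i _ => ?_, hpsum⟩
    by_cases hi : i ∈ Γ
    · simp only [hi, if_true]
      refine ⟨hp0 i, ?_⟩
      calc p i ≤ ∑ i ∈ Γ, p i := Finset.single_le_sum (fun i _ => hp0 i) hi
        _ = 1 := hpsum
    · simp only [hi, if_false]
      exact hpsupp i hi
  have hKprop : ∀ p ∈ K, (∀ i, 0 ≤ p i) ∧ (∀ i ∉ Γ, p i = 0) ∧ (∑ i ∈ Γ, p i = 1) := by
    rintro p ⟨hpi, hpsum⟩
    refine ⟨fun i => ?_, fun i hi => ?_, hpsum⟩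
    · have := hpi i (Set.mem_univ i)
      by_cases hic : i ∈ Γ
      · simp only [hic, if_true] at this; exact this.1
      · simp only [hic, if_false, Set.mem_singleton_iff] at this
        exact le_of_eq this.symm
    · have := hpi i (Set.mem_univ i)
      simp only [hi, if_false] at this
      exact this
  have hKcomp : IsCompact K := by
    refine IsCompact.inter_right ?_ ?_
    · refine isCompact_univ_pi fun i => ?_
      split_ifs
      · exact isCompact_Icc
      · exact isCompact_singleton
    · exact isClosed_eq (continuous_finset_sum _ fun i _ => continuous_apply i)
        continuous_const
  have hKne : K.Nonempty := by
    refine ⟨fun i => if i = i1 then 1 else 0, hKmem _ ?_ ?_ ?_⟩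
    · intro i; split_ifs <;> norm_num
    · intro i hi
      rw [if_neg]; rintro rfl; exact hi hi1
    · rw [Finset.sum_ite_eq' Γ i1 (fun _ => (1:ℝ)), if_pos hi1]
  obtain ⟨pstar, hpstarK, hmax'⟩ := hKcomp.exists_isMaxOn hKne hgcont.continuousOn
  have hmax : ∀ q ∈ K, g q ≤ g pstar := fun q hq => hmax' hq
  -- g pstar < 1
  have hglt : g pstar < 1 := by
    obtain ⟨hps0, hpssupp, hpssum⟩ := hKprop pstar hpstarK
    obtain ⟨w0, hw0ne, s, hs⟩ := exists_nonuniform d N hd hN Γ hΓsub i0 hi0lt hi0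
      pstar hps0 hpssum
    have hw0W : w0 ∈ W := by rw [hWdef, mem_filter]; exact ⟨mem_univ _, hw0ne⟩
    have hbij : Function.Bijective (fun r : Fin N => ((r : ℕ) : ZMod N)) := by
      rw [Fintype.bijective_iff_injective_and_card]
      refine ⟨fun r r' hrr => ?_, by simp [ZMod.card]⟩
      have := congrArg ZMod.val hrr
      rw [ZMod.val_cast_of_lt r.isLt, ZMod.val_cast_of_lt r'.isLt] at this
      exact Fin.ext this
    have hνz : ∀ r : Fin N, ν w0 pstar r =
        ∑ i ∈ Γ.filter (fun i => ∑ j, (i j : ZMod N) * w0 j = ((r:ℕ) : ZMod N)),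
          pstar i := by
      intro r
      rw [hνdef]
      simp only []
      rw [filter_bridge d N Γ w0 r]
    have hE0 : E w0 pstar < 1 := by
      rw [hEdef]
      refine entropy_lt_one N hN _ (fun r => Finset.sum_nonneg fun i _ => hps0 i) ?_ ?_
      · calc ∑ r, ν w0 pstar r
            = ∑ s : ZMod N, ∑ i ∈ Γ.filter
                (fun i => ∑ j, (i j : ZMod N) * w0 j = s), pstar i := by
              refine Fintype.sum_bijective _ hbij _ _ fun r => ?_
              rw [hνz r]
          _ = ∑ i ∈ Γ, pstar i :=
              Finset.sum_fiberwise_of_maps_to (fun i _ => Finset.mem_univ _) pstar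
          _ = 1 := hpssum
      · refine ⟨⟨s.val, s.val_lt⟩, ?_⟩
        rw [hνz]
        have : (((s.val : ℕ)) : ZMod N) = s := ZMod.natCast_rightInverse s
        simpa [this] using hs
    calc g pstar ≤ E w0 pstar := Finset.inf'_le _ hw0W
      _ < 1 := hE0
  refine ⟨V, h0V, 1 - g pstar, by linarith, ?_⟩
  intro p hp0 hpsupp hpsum
  obtain ⟨w, hwW, hginf⟩ := Finset.exists_mem_eq_inf' hWne (fun w => E w p)
  refine ⟨fun j => ((w j).val : ℤ), Finset.mem_image_of_mem _ hwW, ?_⟩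
  have h1 : E w p ≤ g pstar := by
    have := hmax p (hKmem p hp0 hpsupp hpsum)
    rw [hgdef] at this ⊢
    simp only [] at this
    rw [hginf] at this
    exact this
  have h2 : entropyBase N (ν w p) ≤ 1 - (1 - g pstar) := by
    rw [hEdef] at h1; simpa using h1
  exact h2
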